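/- Let E = {d ∈ ℝⁿ : ‖c - D d‖ ≤ ξ} be an ellipsoidal set with D ∈ ℝ^{n×n} invertible, c ∈ ℝⁿ, ξ > 0. Then the number of integer points in E is at least ∏_{i=1}^n max(2ξ/(√n σ_i(D)) - √n, 0), where σ_1(D) ≤ ... ≤ σ_n(D) are the singular values of D. -/

import Mathlib

open Matrix MeasureTheory ENNReal

private lemma orth_sum_sq {n : ℕ} (M : Matrix (Fin n) (Fin n) ℝ) (h : Mᵀ * M = 1)
    (x : Fin n → ℝ) : ∑ i, (M.mulVec x i) ^ 2 = ∑ i, x i ^ 2 := by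
  have key : (M.mulVec x) ⬝ᵥ (M.mulVec x) = x ⬝ᵥ x := by
    rw [Matrix.dotProduct_mulVec, ← Matrix.mulVec_transpose, Matrix.mulVec_mulVec, h,
      Matrix.one_mulVec]
  simpa [dotProduct, sq] using key

/-- Lemma 1 (lower bound): the number of integer points in the ellipsoid
`{d | ‖c - D d‖ ≤ ξ}` (with `D` invertible) is at least
`∏ i, max (2ξ/(√n σ_i(D)) - √n) 0`, where `σ_1(D) ≤ ... ≤ σ_n(D)` are the
singular values of `D`. -/
theorem stmt1 (n : ℕ) (hn : 1 ≤ n) (D : Matrix (Fin n) (Fin n) ℝ) (hD : IsUnit D.det)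
    (c : Fin n → ℝ) (ξ : ℝ) (hξ : 0 < ξ)
    (σ : Fin n → ℝ) (hmono : Monotone σ) (hnn : ∀ i, 0 ≤ σ i)
    (U V : Matrix (Fin n) (Fin n) ℝ) (hU : Uᵀ * U = 1) (hV : Vᵀ * V = 1)
    (hsvd : D = U * Matrix.diagonal σ * Vᵀ) :
    (∏ i, max (2 * ξ / (Real.sqrt n * σ i) - Real.sqrt n) 0)
      ≤ ((Set.ncard {d : Fin n → ℝ | (∀ i, ∃ z : ℤ, d i = (z : ℝ)) ∧
          Real.sqrt (∑ i, (c i - D.mulVec d i) ^ 2) ≤ ξ} : ℕ) : ℝ) := by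
  classical
  by_cases hpos : ∀ i, 0 < 2 * ξ / (Real.sqrt n * σ i) - Real.sqrt n
  swap
  · push_neg at hpos
    obtain ⟨i, hi⟩ := hpos
    calc (∏ i, max (2 * ξ / (Real.sqrt n * σ i) - Real.sqrt n) 0)
        = 0 := Finset.prod_eq_zero (Finset.mem_univ i) (max_eq_right hi)
      _ ≤ _ := Nat.cast_nonneg _
  have hn0 : (0:ℝ) < n := by exact_mod_cast hn
  have hsn : 0 < Real.sqrt n := Real.sqrt_pos.mpr hn0
  have hσ0 : ∀ i, 0 < σ i := by
    intro i
    rcases (hnn i).lt_or_eq with h | h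
    · exact h
    · exfalso
      have hdet : D.det = 0 := by
        rw [hsvd, Matrix.det_mul, Matrix.det_mul, Matrix.det_diagonal,
          Finset.prod_eq_zero (Finset.mem_univ i) h.symm]
        ring
      exact hD.ne_zero hdet
  have hUU : U * Uᵀ = 1 := mul_eq_one_comm.mp hU
  have hVV : V * Vᵀ = 1 := mul_eq_one_comm.mp hV
  set m : Fin n → ℝ := Uᵀ.mulVec c with hm
  set y₀ : Fin n → ℝ := fun i => m i / σ i with hy₀
  set t : Fin n → ℝ := fun i => ξ / (Real.sqrt n * σ i) - Real.sqrt n / 2 with ht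
  have ht2 : ∀ i, 2 * t i = 2 * ξ / (Real.sqrt n * σ i) - Real.sqrt n := by
    intro i; simp only [ht]; ring
  have ht0 : ∀ i, 0 < t i := by
    intro i
    have h1 := hpos i
    have h2 : 2 * (ξ / (Real.sqrt n * σ i) - Real.sqrt n / 2)
        = 2 * ξ / (Real.sqrt n * σ i) - Real.sqrt n := by ring
    simp only [ht]
    linarith
  -- key geometric lemma
  have key : ∀ y : Fin n → ℝ, (∀ i, |y i - y₀ i| ≤ t i) →
      ∀ w : Fin n → ℝ, (∑ i, (w i - V.mulVec y i) ^ 2) ≤ (n:ℝ)/4 →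
      Real.sqrt (∑ i, (c i - D.mulVec w i) ^ 2) ≤ ξ := by
    intro y hy w hw
    set u : Fin n → ℝ := Vᵀ.mulVec w with hu
    have hA : ∀ i, Uᵀ.mulVec (c - D.mulVec w) i = m i - σ i * u i := by
      intro i
      rw [Matrix.mulVec_sub]
      have h1 : Uᵀ.mulVec (D.mulVec w) = fun j => σ j * u j := by
        rw [hsvd, Matrix.mulVec_mulVec,
          show Uᵀ * (U * Matrix.diagonal σ * Vᵀ) = Matrix.diagonal σ * Vᵀ by
            rw [← Matrix.mul_assoc, ← Matrix.mul_assoc, hU, Matrix.one_mul],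
          ← Matrix.mulVec_mulVec]
        funext j
        rw [Matrix.mulVec_diagonal]
      simp [h1, hm]
    have horth := orth_sum_sq Uᵀ (by rw [Matrix.transpose_transpose]; exact hUU)
      (c - D.mulVec w)
    have hA' : ∑ i, (c i - D.mulVec w i) ^ 2 = ∑ i, (m i - σ i * u i) ^ 2 := by
      have h0 : ∑ i, (c i - D.mulVec w i) ^ 2 = ∑ i, ((c - D.mulVec w) i) ^ 2 := by simp
      rw [h0, ← horth]
      exact Finset.sum_congr rfl fun i _ => by rw [hA i]
    have hsum_e : ∑ i, (u i - y i) ^ 2 ≤ (n:ℝ)/4 := by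
      have h1 : u - y = Vᵀ.mulVec (w - V.mulVec y) := by
        rw [Matrix.mulVec_sub, Matrix.mulVec_mulVec, hV, Matrix.one_mulVec, hu]
      have h2 := orth_sum_sq Vᵀ (by rw [Matrix.transpose_transpose]; exact hVV)
        (w - V.mulVec y)
      calc ∑ i, (u i - y i) ^ 2 = ∑ i, (Vᵀ.mulVec (w - V.mulVec y) i) ^ 2 := by
            rw [← h1]; simp
        _ = ∑ i, ((w - V.mulVec y) i) ^ 2 := h2
        _ = ∑ i, (w i - V.mulVec y i) ^ 2 := by simp
        _ ≤ (n:ℝ)/4 := hw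
    have he : ∀ i, |u i - y i| ≤ Real.sqrt n / 2 := by
      intro i
      have h1 : (u i - y i) ^ 2 ≤ (n:ℝ)/4 :=
        le_trans (Finset.single_le_sum (fun j _ => sq_nonneg (u j - y j))
          (Finset.mem_univ i)) hsum_e
      rw [← Real.sqrt_sq_eq_abs]
      calc Real.sqrt ((u i - y i) ^ 2) ≤ Real.sqrt ((n:ℝ)/4) := Real.sqrt_le_sqrt h1
        _ = Real.sqrt n / 2 := by
            rw [show (n:ℝ)/4 = n * (1/2)^2 by ring, Real.sqrt_mul (le_of_lt hn0),
              Real.sqrt_sq (by norm_num : (0:ℝ) ≤ 1/2)]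
            ring
    have hcoord : ∀ i, |m i - σ i * u i| ≤ ξ / Real.sqrt n := by
      intro i
      have hσ := hσ0 i
      have h1 : m i = σ i * y₀ i := by
        simp only [hy₀]
        field_simp
      rw [h1, ← mul_sub, abs_mul, abs_of_pos hσ]
      have h2 : |y₀ i - u i| ≤ t i + Real.sqrt n / 2 :=
        calc |y₀ i - u i| ≤ |y₀ i - y i| + |y i - u i| := abs_sub_le _ _ _
          _ = |y i - y₀ i| + |u i - y i| := by
              rw [abs_sub_comm (y₀ i) (y i), abs_sub_comm (y i) (u i)]
          _ ≤ t i + Real.sqrt n / 2 := add_le_add (hy i) (he i)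
      have h3 : σ i * (t i + Real.sqrt n / 2) = ξ / Real.sqrt n := by
        simp only [ht]
        field_simp
        ring
      calc σ i * |y₀ i - u i| ≤ σ i * (t i + Real.sqrt n / 2) :=
            mul_le_mul_of_nonneg_left h2 (le_of_lt hσ)
        _ = ξ / Real.sqrt n := h3
    have hsum : ∑ i, (m i - σ i * u i) ^ 2 ≤ ξ ^ 2 := by
      calc ∑ i, (m i - σ i * u i) ^ 2 ≤ ∑ _i : Fin n, (ξ / Real.sqrt n) ^ 2 := by
            apply Finset.sum_le_sum
            intro i _
            calc (m i - σ i * u i) ^ 2 = |m i - σ i * u i| ^ 2 := (sq_abs _).symm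
              _ ≤ (ξ / Real.sqrt n) ^ 2 :=
                  pow_le_pow_left₀ (abs_nonneg _) (hcoord i) 2
        _ = ξ ^ 2 := by
            rw [Finset.sum_const, Finset.card_univ, Fintype.card_fin, nsmul_eq_mul,
              div_pow, Real.sq_sqrt (le_of_lt hn0)]
            field_simp
    rw [hA']
    calc Real.sqrt (∑ i, (m i - σ i * u i) ^ 2) ≤ Real.sqrt (ξ ^ 2) :=
          Real.sqrt_le_sqrt hsum
      _ = ξ := Real.sqrt_sq (le_of_lt hξ)
  -- the box and its image
  set B : Set (Fin n → ℝ) := Set.univ.pi fun i => Set.Icc (y₀ i - t i) (y₀ i + t i) with hB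
  set T : Set (Fin n → ℝ) := (Matrix.toLin' V) '' B with hT
  set ι : (Fin n → ℤ) → (Fin n → ℝ) := fun v i => (v i : ℝ) with hιdef
  have hι_inj : Function.Injective ι := by
    intro a b h
    funext i
    have := congrFun h i
    simp only [hιdef] at this
    exact_mod_cast this
  set Z : Set (Fin n → ℤ) := {v | Real.sqrt (∑ i, (c i - D.mulVec (ι v) i) ^ 2) ≤ ξ} with hZ
  have hSZ : {d : Fin n → ℝ | (∀ i, ∃ z : ℤ, d i = (z : ℝ)) ∧
      Real.sqrt (∑ i, (c i - D.mulVec d i) ^ 2) ≤ ξ} = ι '' Z := by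
    ext d
    simp only [Set.mem_setOf_eq, Set.mem_image]
    constructor
    · rintro ⟨h1, h2⟩
      have hd : ι (fun i => (h1 i).choose) = d := by
        funext i
        simp only [hιdef]
        exact ((h1 i).choose_spec).symm
      exact ⟨fun i => (h1 i).choose, by rw [hZ, Set.mem_setOf_eq, hd]; exact h2, hd⟩
    · rintro ⟨v, hv, rfl⟩
      exact ⟨fun i => ⟨v i, rfl⟩, hv⟩
  -- Z is finite
  have hZfin : Z.Finite := by
    obtain ⟨K, hK⟩ : ∃ K : ℝ, ∀ v ∈ Z, ∀ j, |(v j : ℝ)| ≤ K := by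
      refine ⟨(∑ j, ∑ k, |D⁻¹ j k|) * ((∑ i, |c i|) + ξ), ?_⟩
      intro v hv j
      rw [hZ, Set.mem_setOf_eq] at hv
      have hb : ∀ k, |D.mulVec (ι v) k| ≤ (∑ i, |c i|) + ξ := by
        intro k
        have hnnsum : (0:ℝ) ≤ ∑ i, (c i - D.mulVec (ι v) i) ^ 2 :=
          Finset.sum_nonneg fun i _ => sq_nonneg _
        have h3 : ∑ i, (c i - D.mulVec (ι v) i) ^ 2 ≤ ξ ^ 2 := by
          have hs := Real.sq_sqrt hnnsum
          nlinarith [Real.sqrt_nonneg (∑ i, (c i - D.mulVec (ι v) i) ^ 2)]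
        have h4 : (c k - D.mulVec (ι v) k) ^ 2 ≤ ξ ^ 2 :=
          le_trans (Finset.single_le_sum (f := fun i => (c i - D.mulVec (ι v) i) ^ 2)
            (fun i _ => sq_nonneg _) (Finset.mem_univ k)) h3
        have h5 : |c k - D.mulVec (ι v) k| ≤ ξ := by
          rw [← Real.sqrt_sq_eq_abs]
          calc Real.sqrt ((c k - D.mulVec (ι v) k) ^ 2) ≤ Real.sqrt (ξ ^ 2) :=
                Real.sqrt_le_sqrt h4
            _ = ξ := Real.sqrt_sq hξ.le
        have h6 : |c k| ≤ ∑ i, |c i| :=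
          Finset.single_le_sum (fun i _ => abs_nonneg (c i)) (Finset.mem_univ k)
        have h7 := abs_le.mp h5
        rw [abs_le]
        constructor <;> [nlinarith [neg_abs_le (c k), le_abs_self (c k)];
          nlinarith [neg_abs_le (c k), le_abs_self (c k)]]
      have hvj : ι v = D⁻¹.mulVec (D.mulVec (ι v)) := by
        rw [Matrix.mulVec_mulVec, Matrix.nonsing_inv_mul D hD, Matrix.one_mulVec]
      have hexp : (v j : ℝ) = ∑ k, D⁻¹ j k * D.mulVec (ι v) k := by
        have h := congrFun hvj j
        simp only [hιdef] at h
        rw [h]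
        simp [Matrix.mulVec, dotProduct, hιdef]
      rw [hexp]
      calc |∑ k, D⁻¹ j k * D.mulVec (ι v) k| ≤ ∑ k, |D⁻¹ j k * D.mulVec (ι v) k| :=
            Finset.abs_sum_le_sum_abs _ _
        _ ≤ ∑ k, |D⁻¹ j k| * ((∑ i, |c i|) + ξ) := by
            apply Finset.sum_le_sum
            intro k _
            rw [abs_mul]
            exact mul_le_mul_of_nonneg_left (hb k) (abs_nonneg _)
        _ = (∑ k, |D⁻¹ j k|) * ((∑ i, |c i|) + ξ) := by rw [Finset.sum_mul]
        _ ≤ (∑ j, ∑ k, |D⁻¹ j k|) * ((∑ i, |c i|) + ξ) := by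
            apply mul_le_mul_of_nonneg_right
            · exact Finset.single_le_sum (f := fun j => ∑ k, |D⁻¹ j k|)
                (fun j _ => Finset.sum_nonneg fun k _ => abs_nonneg _) (Finset.mem_univ j)
            · positivity
    apply Set.Finite.subset (Set.Finite.pi fun _ : Fin n => Set.finite_Icc (-⌈K⌉) ⌈K⌉)
    intro v hv
    rw [Set.mem_univ_pi]
    intro j
    rw [Set.mem_Icc]
    have h := hK v hv j
    have hceil := Int.le_ceil K
    constructor
    · have h2 : -(⌈K⌉:ℝ) ≤ (v j : ℝ) := by
        have := neg_abs_le ((v j : ℝ))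
        linarith
      exact_mod_cast h2
    · have h2 : (v j : ℝ) ≤ (⌈K⌉:ℝ) := le_trans (le_abs_self _) (le_trans h hceil)
      exact_mod_cast h2
  -- covering T by unit cubes at integer points of Z
  have hcover : T ⊆ ⋃ v ∈ hZfin.toFinset,
      Set.univ.pi fun i => Set.Icc ((ι v i) - 1/2) ((ι v i) + 1/2) := by
    intro x hx
    obtain ⟨y, hyB, hyx⟩ := hx
    rw [hB, Set.mem_univ_pi] at hyB
    have hxy : V.mulVec y = x := by rw [← hyx, Matrix.toLin'_apply]
    set v : Fin n → ℤ := fun i => round (x i) with hvdef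
    have hvr : ∀ i, |x i - ι v i| ≤ 1/2 := by
      intro i
      simpa [hιdef, hvdef] using abs_sub_round (x i)
    have hvZ : v ∈ Z := by
      rw [hZ, Set.mem_setOf_eq]
      apply key y ?_ (ι v) ?_
      · intro i
        have h := hyB i
        rw [Set.mem_Icc] at h
        rw [abs_le]
        exact ⟨by linarith [h.1], by linarith [h.2]⟩
      · rw [hxy]
        calc ∑ i, (ι v i - x i) ^ 2 ≤ ∑ _i : Fin n, ((1:ℝ)/2) ^ 2 := by
              apply Finset.sum_le_sum
              intro i _
              have h : |ι v i - x i| ≤ 1/2 := by rw [abs_sub_comm]; exact hvr i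
              calc (ι v i - x i) ^ 2 = |ι v i - x i| ^ 2 := (sq_abs _).symm
                _ ≤ ((1:ℝ)/2) ^ 2 := pow_le_pow_left₀ (abs_nonneg _) h 2
          _ = (n:ℝ)/4 := by
              rw [Finset.sum_const, Finset.card_univ, Fintype.card_fin, nsmul_eq_mul]
              ring
    refine Set.mem_biUnion (hZfin.mem_toFinset.mpr hvZ) ?_
    rw [Set.mem_univ_pi]
    intro i
    rw [Set.mem_Icc]
    have h2 := abs_le.mp (hvr i)
    exact ⟨by linarith [h2.2], by linarith [h2.1]⟩
  -- volumes
  have hμB : volume B = ENNReal.ofReal (∏ i, (2 * t i)) := by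
    rw [hB, volume_pi_pi,
      ENNReal.ofReal_prod_of_nonneg (fun i _ => by linarith [ht0 i])]
    apply Finset.prod_congr rfl
    intro i _
    rw [Real.volume_Icc]
    congr 1
    ring
  have hdetV : |LinearMap.det (Matrix.toLin' V)| = 1 := by
    rw [LinearMap.det_toLin']
    have h2 : V.det ^ 2 = 1 := by
      have h1 : (Vᵀ * V).det = 1 := by rw [hV, Matrix.det_one]
      rwa [Matrix.det_mul, Matrix.det_transpose, ← sq] at h1
    have h3 : (V.det - 1) * (V.det + 1) = 0 := by ring_nf; linarith [h2]
    rcases mul_eq_zero.mp h3 with h | h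
    · rw [show V.det = 1 by linarith]; norm_num
    · rw [show V.det = -1 by linarith]; norm_num
  have hμT : volume T = volume B := by
    rw [hT, Measure.addHaar_image_linearMap, hdetV, ENNReal.ofReal_one, one_mul]
  have hcount : volume T ≤ (hZfin.toFinset.card : ℝ≥0∞) := by
    calc volume T ≤ volume (⋃ v ∈ hZfin.toFinset,
          Set.univ.pi fun i => Set.Icc ((ι v i) - 1/2) ((ι v i) + 1/2)) :=
          measure_mono hcover
      _ ≤ (∑ v ∈ hZfin.toFinset,
            volume (Set.univ.pi fun i => Set.Icc ((ι v i) - 1/2) ((ι v i) + 1/2))) :=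
          measure_biUnion_finset_le _ _
      _ = (∑ _v ∈ hZfin.toFinset, (1:ℝ≥0∞)) := by
          apply Finset.sum_congr rfl
          intro v _
          rw [volume_pi_pi]
          have h1 : ∀ i : Fin n, volume (Set.Icc ((ι v i) - 1/2) ((ι v i) + 1/2)) = 1 := by
            intro i
            rw [Real.volume_Icc, show (ι v i + 1/2) - (ι v i - 1/2) = 1 by ring,
              ENNReal.ofReal_one]
          rw [Finset.prod_congr rfl fun i _ => h1 i, Finset.prod_const_one]
      _ = (hZfin.toFinset.card : ℝ≥0∞) := by simp
  have hchain : ENNReal.ofReal (∏ i, (2 * t i)) ≤ (hZfin.toFinset.card : ℝ≥0∞) := by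
    rw [← hμB, ← hμT]; exact hcount
  have hprod_nonneg : (0:ℝ) ≤ ∏ i, (2 * t i) :=
    Finset.prod_nonneg fun i _ => by linarith [ht0 i]
  have hfinal : (∏ i, (2 * t i)) ≤ (hZfin.toFinset.card : ℝ) := by
    have hmono' := ENNReal.toReal_mono (by simp : ((hZfin.toFinset.card : ℝ≥0∞) ≠ ⊤)) hchain
    rw [ENNReal.toReal_ofReal hprod_nonneg] at hmono'
    simpa using hmono'
  rw [hSZ, Set.ncard_image_of_injective _ hι_inj, Set.ncard_eq_toFinset_card _ hZfin]
  calc ∏ i, max (2 * ξ / (Real.sqrt n * σ i) - Real.sqrt n) 0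
      = ∏ i, (2 * t i) := Finset.prod_congr rfl fun i _ => by
        rw [← ht2 i]; exact max_eq_left (by linarith [ht0 i])
    _ ≤ _ := hfinal
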